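/- Let (m_i)_{i ∈ I} be a basis of the k-vector space M and (a_{ij})_{i,j ∈ I} a family of scalars in k. Then the k-linear map R : M ⊗ M → M ⊗ M determined by R(m_i ⊗ m_j) = a_{ij} m_i ⊗ m_j for all i, j ∈ I is a solution of the Long equation. In particular the identity of M ⊗ M is a solution of the Long equation. -/

import Mathlib

open TensorProduct

noncomputable section

variable {k M : Type*} [Field k] [AddCommGroup M] [Module k M]

/-- The flip map τ : M ⊗ M → M ⊗ M, τ(m ⊗ n) = n ⊗ m. -/
def tau (k M : Type*) [Field k] [AddCommGroup M] [Module k M] :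
    M ⊗[k] M →ₗ[k] M ⊗[k] M := (TensorProduct.comm k M M).toLinearMap

/-- R¹² = R ⊗ id on M ⊗ (M ⊗ M) (transported along the associator). -/
def R12 (R : M ⊗[k] M →ₗ[k] M ⊗[k] M) :
    M ⊗[k] (M ⊗[k] M) →ₗ[k] M ⊗[k] (M ⊗[k] M) :=
  (TensorProduct.assoc k M M M).toLinearMap ∘ₗ
    TensorProduct.map R LinearMap.id ∘ₗ (TensorProduct.assoc k M M M).symm.toLinearMap

/-- R²³ = id ⊗ R on M ⊗ (M ⊗ M). -/
def R23 (R : M ⊗[k] M →ₗ[k] M ⊗[k] M) :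
    M ⊗[k] (M ⊗[k] M) →ₗ[k] M ⊗[k] (M ⊗[k] M) :=
  TensorProduct.map LinearMap.id R

/-- R¹³ = (id ⊗ τ)(R ⊗ id)(id ⊗ τ) on M ⊗ (M ⊗ M). -/
def R13 (R : M ⊗[k] M →ₗ[k] M ⊗[k] M) :
    M ⊗[k] (M ⊗[k] M) →ₗ[k] M ⊗[k] (M ⊗[k] M) :=
  TensorProduct.map LinearMap.id (tau k M) ∘ₗ R12 R ∘ₗ
    TensorProduct.map LinearMap.id (tau k M)

/-- R is a solution of the Long equation: R¹²R¹³ = R¹³R¹² and R¹²R²³ = R²³R¹². -/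
def IsLongSolution (R : M ⊗[k] M →ₗ[k] M ⊗[k] M) : Prop :=
  R12 R ∘ₗ R13 R = R13 R ∘ₗ R12 R ∧ R12 R ∘ₗ R23 R = R23 R ∘ₗ R12 R

lemma R12_tmul (R : M ⊗[k] M →ₗ[k] M ⊗[k] M) {I : Type*} (m : Module.Basis I k M)
    (a : I → I → k) (hR : ∀ i j, R (m i ⊗ₜ[k] m j) = a i j • (m i ⊗ₜ[k] m j))
    (i j l : I) :
    R12 R (m i ⊗ₜ[k] (m j ⊗ₜ[k] m l)) = a i j • (m i ⊗ₜ[k] (m j ⊗ₜ[k] m l)) := by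
  simp [R12, hR, TensorProduct.smul_tmul']

lemma R13_tmul (R : M ⊗[k] M →ₗ[k] M ⊗[k] M) {I : Type*} (m : Module.Basis I k M)
    (a : I → I → k) (hR : ∀ i j, R (m i ⊗ₜ[k] m j) = a i j • (m i ⊗ₜ[k] m j))
    (i j l : I) :
    R13 R (m i ⊗ₜ[k] (m j ⊗ₜ[k] m l)) = a i l • (m i ⊗ₜ[k] (m j ⊗ₜ[k] m l)) := by
  simp [R13, tau, R12_tmul R m a hR]

lemma R23_tmul (R : M ⊗[k] M →ₗ[k] M ⊗[k] M) {I : Type*} (m : Module.Basis I k M)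
    (a : I → I → k) (hR : ∀ i j, R (m i ⊗ₜ[k] m j) = a i j • (m i ⊗ₜ[k] m j))
    (i j l : I) :
    R23 R (m i ⊗ₜ[k] (m j ⊗ₜ[k] m l)) = a j l • (m i ⊗ₜ[k] (m j ⊗ₜ[k] m l)) := by
  simp [R23, hR]

lemma diag_isLongSolution (R : M ⊗[k] M →ₗ[k] M ⊗[k] M) {I : Type*} (m : Module.Basis I k M)
    (a : I → I → k) (hR : ∀ i j, R (m i ⊗ₜ[k] m j) = a i j • (m i ⊗ₜ[k] m j)) :
    IsLongSolution R := by
  constructor <;>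
  · apply (m.tensorProduct (m.tensorProduct m)).ext
    rintro ⟨i, j, l⟩
    simp only [Module.Basis.tensorProduct_apply, LinearMap.comp_apply,
      R12_tmul R m a hR, R13_tmul R m a hR, R23_tmul R m a hR, map_smul,
      smul_smul, mul_comm]

end

theorem long_equation_diagonal
    {k M : Type*} [Field k] [AddCommGroup M] [Module k M]
    {I : Type*} (m : Module.Basis I k M) (a : I → I → k)
    (R : M ⊗[k] M →ₗ[k] M ⊗[k] M)
    (hR : ∀ i j, R (m i ⊗ₜ[k] m j) = a i j • (m i ⊗ₜ[k] m j)) :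
    IsLongSolution R ∧
      IsLongSolution (LinearMap.id : M ⊗[k] M →ₗ[k] M ⊗[k] M) := by
  refine ⟨diag_isLongSolution R m a hR, diag_isLongSolution _ m (fun _ _ => 1) ?_⟩
  simp
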